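/- Let X be a real random variable with density p such that C^α := ∫ p(x)^α / φ(x)^{α-1} dx < ∞, with α > 1 and β = α/(α-1). Then for all real t, E e^{tX} ≤ C e^{β t²/2}, and consequently P(X ≥ r) ≤ C e^{-r²/(2β)} for all r ≥ 0. -/

import Mathlib

open MeasureTheory Real ENNReal

/-- The standard normal density on the real line. -/
noncomputable def stdNormalPDF (x : ℝ) : ℝ :=
  (Real.sqrt (2 * Real.pi))⁻¹ * Real.exp (-x ^ 2 / 2)

lemma stdNormalPDF_pos (x : ℝ) : 0 < stdNormalPDF x := by
  unfold stdNormalPDF; positivity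

lemma stdNormalPDF_measurable : Measurable stdNormalPDF := by
  unfold stdNormalPDF; fun_prop

lemma exp_mul_stdNormal (c : ℝ) :
    (∀ x, Real.exp (c * x) * stdNormalPDF x
        = Real.exp (c ^ 2 / 2) * ProbabilityTheory.gaussianPDFReal c 1 x) := by
  intro x
  unfold stdNormalPDF ProbabilityTheory.gaussianPDFReal
  push_cast
  rw [mul_one, mul_one]
  rw [← mul_assoc, mul_comm (Real.exp (c*x)), mul_assoc, ← Real.exp_add,
    mul_comm (Real.exp (c^2/2)), mul_assoc, ← Real.exp_add]
  congr 1
  ring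

lemma integrable_exp_mul_stdNormal (c : ℝ) :
    Integrable (fun x => Real.exp (c * x) * stdNormalPDF x) := by
  have : (fun x => Real.exp (c * x) * stdNormalPDF x)
      = fun x => Real.exp (c ^ 2 / 2) * ProbabilityTheory.gaussianPDFReal c 1 x := by
    funext x; exact exp_mul_stdNormal c x
  rw [this]
  exact (ProbabilityTheory.integrable_gaussianPDFReal c 1).const_mul _

lemma integral_exp_mul_stdNormal (c : ℝ) :
    (∫ x, Real.exp (c * x) * stdNormalPDF x) = Real.exp (c ^ 2 / 2) := by
  have : (fun x => Real.exp (c * x) * stdNormalPDF x)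
      = fun x => Real.exp (c ^ 2 / 2) * ProbabilityTheory.gaussianPDFReal c 1 x := by
    funext x; exact exp_mul_stdNormal c x
  rw [this, integral_const_mul, ProbabilityTheory.integral_gaussianPDFReal_eq_one c one_ne_zero,
    mul_one]

/-- If `X` has density `p` with `∫ p^α / φ^{α-1} = C^α < ∞` (`α > 1`, `β = α/(α-1)`),
then `E e^{tX} ≤ C e^{β t²/2}` for all `t`, and `P(X ≥ r) ≤ C e^{-r²/(2β)}` for `r ≥ 0`. -/
theorem laplace_transform_bound (α β C : ℝ) (hα : 1 < α) (hβ : β = α / (α - 1)) (hC : 0 ≤ C)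
    (p : ℝ → ℝ) (hpm : Measurable p) (hp : ∀ x, 0 ≤ p x) (hdens : (∫ x, p x) = 1)
    (hfin : Integrable (fun x => p x ^ α / stdNormalPDF x ^ (α - 1)))
    (hCdef : (∫ x, p x ^ α / stdNormalPDF x ^ (α - 1)) = C ^ α) :
    (∀ t : ℝ, (∫⁻ x, ENNReal.ofReal (Real.exp (t * x) * p x))
        ≤ ENNReal.ofReal (C * Real.exp (β * t ^ 2 / 2))) ∧
    (∀ r : ℝ, 0 ≤ r →
      (∫⁻ x in {x : ℝ | r ≤ x}, ENNReal.ofReal (p x))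
        ≤ ENNReal.ofReal (C * Real.exp (-r ^ 2 / (2 * β)))) := by
  have hα0 : (0:ℝ) < α := lt_trans one_pos hα
  have hα1 : (0:ℝ) < α - 1 := sub_pos.mpr hα
  have hβ0 : 0 < β := by rw [hβ]; positivity
  set γ : ℝ := (α - 1) / α with hγdef
  have hγ0 : 0 < γ := by rw [hγdef]; positivity
  have hγα : γ * α = α - 1 := by rw [hγdef]; field_simp
  have hγβ : γ * β = 1 := by rw [hβ, hγdef]; field_simp
  have hφpos := stdNormalPDF_pos
  have hφm := stdNormalPDF_measurable
  have hconj : Real.HolderConjugate α β := by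
    have h := Real.HolderConjugate.conjExponent hα
    rwa [show Real.conjExponent α = β from by rw [hβ]; rfl] at h
  have hmain : ∀ t : ℝ, (∫⁻ x, ENNReal.ofReal (Real.exp (t * x) * p x))
      ≤ ENNReal.ofReal (C * Real.exp (β * t ^ 2 / 2)) := by
    intro t
    set f : ℝ → ℝ≥0∞ := fun x => ENNReal.ofReal (p x / stdNormalPDF x ^ γ) with hfdef
    set g : ℝ → ℝ≥0∞ := fun x => ENNReal.ofReal (Real.exp (t * x) * stdNormalPDF x ^ γ)
      with hgdef
    have hfm : Measurable fun x => ENNReal.ofReal (p x / stdNormalPDF x ^ γ) := by fun_prop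
    have hgm : Measurable fun x =>
        ENNReal.ofReal (Real.exp (t * x) * stdNormalPDF x ^ γ) := by fun_prop
    have hfg : ∀ x, (f * g) x = ENNReal.ofReal (Real.exp (t * x) * p x) := by
      intro x
      have hpos : 0 < stdNormalPDF x ^ γ := Real.rpow_pos_of_pos (hφpos x) γ
      simp only [Pi.mul_apply, hfdef, hgdef]
      rw [← ENNReal.ofReal_mul (div_nonneg (hp x) hpos.le)]
      congr 1
      field_simp
    have hfα : ∀ x, f x ^ α = ENNReal.ofReal (p x ^ α / stdNormalPDF x ^ (α - 1)) := by
      intro x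
      have hpos : 0 < stdNormalPDF x ^ γ := Real.rpow_pos_of_pos (hφpos x) γ
      simp only [hfdef]
      rw [ENNReal.ofReal_rpow_of_nonneg (div_nonneg (hp x) hpos.le) hα0.le]
      congr 1
      rw [Real.div_rpow (hp x) hpos.le, ← Real.rpow_mul (hφpos x).le, hγα]
    have hgβ : ∀ x, g x ^ β = ENNReal.ofReal (Real.exp (β * t * x) * stdNormalPDF x) := by
      intro x
      have hpos : 0 < stdNormalPDF x ^ γ := Real.rpow_pos_of_pos (hφpos x) γ
      simp only [hgdef]
      rw [ENNReal.ofReal_rpow_of_nonneg (by positivity) hβ0.le]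
      congr 1
      rw [Real.mul_rpow (Real.exp_nonneg _) hpos.le, ← Real.exp_mul,
        ← Real.rpow_mul (hφpos x).le, hγβ, Real.rpow_one]
      congr 2
      ring
    have hIf : (∫⁻ x, f x ^ α) = ENNReal.ofReal (C ^ α) := by
      rw [lintegral_congr hfα,
        ← ofReal_integral_eq_lintegral_ofReal hfin
          (Filter.Eventually.of_forall fun x =>
            div_nonneg (Real.rpow_nonneg (hp x) α) (Real.rpow_nonneg (hφpos x).le _)),
        hCdef]
    have hIg : (∫⁻ x, g x ^ β) = ENNReal.ofReal (Real.exp ((β * t) ^ 2 / 2)) := by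
      rw [lintegral_congr hgβ,
        ← ofReal_integral_eq_lintegral_ofReal (integrable_exp_mul_stdNormal (β * t))
          (Filter.Eventually.of_forall fun x =>
            mul_nonneg (Real.exp_nonneg _) (hφpos x).le),
        integral_exp_mul_stdNormal]
    calc (∫⁻ x, ENNReal.ofReal (Real.exp (t * x) * p x)) = ∫⁻ x, (f * g) x :=
          lintegral_congr fun x => (hfg x).symm
      _ ≤ (∫⁻ x, f x ^ α) ^ (1/α) * (∫⁻ x, g x ^ β) ^ (1/β) :=
          ENNReal.lintegral_mul_le_Lp_mul_Lq volume hconj hfm.aemeasurable hgm.aemeasurable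
      _ = ENNReal.ofReal C * ENNReal.ofReal (Real.exp (β * t ^ 2 / 2)) := by
          rw [hIf, hIg, ← ENNReal.ofReal_rpow_of_nonneg hC hα0.le, ← ENNReal.rpow_mul,
            mul_one_div_cancel hα0.ne', ENNReal.rpow_one,
            ENNReal.ofReal_rpow_of_nonneg (Real.exp_nonneg _) (by positivity),
            ← Real.exp_mul]
          congr 3
          field_simp
      _ = ENNReal.ofReal (C * Real.exp (β * t ^ 2 / 2)) := (ENNReal.ofReal_mul hC).symm
  refine ⟨hmain, fun r hr => ?_⟩
  set t : ℝ := r / β with ht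
  have ht0 : 0 ≤ t := div_nonneg hr hβ0.le
  have hmeas : Measurable fun x =>
      ENNReal.ofReal (Real.exp (-(t*r)) * (Real.exp (t * x) * p x)) := by fun_prop
  calc (∫⁻ x in {x : ℝ | r ≤ x}, ENNReal.ofReal (p x))
      ≤ ∫⁻ x in {x : ℝ | r ≤ x},
          ENNReal.ofReal (Real.exp (-(t*r)) * (Real.exp (t * x) * p x)) := by
        refine setLIntegral_mono hmeas fun x hx => ?_
        apply ENNReal.ofReal_le_ofReal
        rw [← mul_assoc, ← Real.exp_add]
        nth_rewrite 1 [← one_mul (p x)]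
        refine mul_le_mul_of_nonneg_right ?_ (hp x)
        exact Real.one_le_exp (by nlinarith [Set.mem_setOf.mp hx])
    _ ≤ ∫⁻ x, ENNReal.ofReal (Real.exp (-(t*r)) * (Real.exp (t * x) * p x)) :=
        setLIntegral_le_lintegral _ _
    _ = ENNReal.ofReal (Real.exp (-(t*r))) * ∫⁻ x, ENNReal.ofReal (Real.exp (t * x) * p x) := by
        simp_rw [ENNReal.ofReal_mul (Real.exp_nonneg (-(t*r)))]
        exact lintegral_const_mul _ (by fun_prop)
    _ ≤ ENNReal.ofReal (Real.exp (-(t*r))) * ENNReal.ofReal (C * Real.exp (β * t ^ 2 / 2)) :=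
        mul_le_mul_right (hmain t) _
    _ = ENNReal.ofReal (C * Real.exp (-r ^ 2 / (2 * β))) := by
        rw [← ENNReal.ofReal_mul (Real.exp_nonneg _)]
        congr 1
        rw [mul_comm, mul_assoc, ← Real.exp_add]
        congr 2
        rw [ht]
        field_simp
        ring
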